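/- Let E be a field of characteristic 0, G a group, and V a finite-dimensional irreducible representation of G over E. Let χ: G → Eˣ be a group homomorphism with χ(g)² = 1 for all g ∈ G and χ(g₀) = −1 for some g₀ ∈ G; set N = ker χ. Let ψ: V → V be a bijective χ-twisted equivariant E-linear map with ψ ∘ ψ = α · id_V, where α ∈ Eˣ is not a square in E. Let F = E(β) be a quadratic extension of E generated by an element β with β² = α, and let ψ_F denote the F-linear extension of ψ to F ⊗_E V. Assume that the two eigenspaces ker(ψ_F − β·id) and ker(ψ_F + β·id) in F ⊗_E V are irreducible and mutually non-isomorphic as representations of N over F. Then V is irreducible as a representation of N over E. -/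

import Mathlib

open scoped TensorProduct

/-- coordinate functional applied to elements of a base-changed submodule stays in U -/
lemma coordAux {E V F : Type*} [Field E] [AddCommGroup V] [Module E V]
    [Field F] [Algebra E F] (U : Submodule E V) {x : F ⊗[E] V}
    (hx : x ∈ U.baseChange F) (φ : F →ₗ[E] E) :
    TensorProduct.lift ((LinearMap.lsmul E V).comp φ) x ∈ U := by
  have key : ∀ (ψ : F →ₗ[E] E) (c : F) (y : F ⊗[E] V),
      TensorProduct.lift ((LinearMap.lsmul E V).comp ψ) (c • y)
        = TensorProduct.lift ((LinearMap.lsmul E V).comp (ψ.comp (LinearMap.mulLeft E c))) y := by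
    intro ψ c y
    induction y using TensorProduct.induction_on with
    | zero => simp
    | tmul a v => rw [TensorProduct.smul_tmul']; simp [smul_eq_mul]
    | add a b ha hb => rw [smul_add, map_add, map_add, ha, hb]
  revert φ
  refine Submodule.span_induction (p := fun x _ => ∀ φ : F →ₗ[E] E,
      TensorProduct.lift ((LinearMap.lsmul E V).comp φ) x ∈ U) ?_ ?_ ?_ ?_ (Submodule.baseChange_eq_span F U ▸ hx)
  · rintro _ ⟨u, hu, rfl⟩ φ
    simpa using U.smul_mem (φ 1) hu
  · intro φ; simp
  · intro a b _ _ ha hb φ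
    rw [map_add]; exact U.add_mem (ha φ) (hb φ)
  · intro c y _ hy φ
    rw [key]; exact hy _


/-- Base change of a representation along a commutative-ring extension `E → F`. -/
noncomputable def repBaseChange {E G V : Type*} [CommSemiring E] [Monoid G]
    [AddCommMonoid V] [Module E V] (F : Type*) [CommSemiring F] [Algebra E F]
    (ρ : Representation E G V) : Representation F G (F ⊗[E] V) :=
  (Module.End.baseChangeHom E F V).toRingHom.toMonoidHom.comp ρ

set_option maxHeartbeats 2000000 in
/-- let `V` be a finite-dimensional irreducible representation of `G`
over a field `E` of characteristic 0, `χ : G → Eˣ` a character squaring to `1` and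
taking the value `-1`, `ψ` a bijective `χ`-twisted equivariant endomorphism with
`ψ² = α·id` where `α ∈ Eˣ` is not a square in `E`, and `F = E(β)` a quadratic
extension with `β² = α`.  If the two eigenspaces of `ψ_F` on `F ⊗_E V` are irreducible
and mutually non-isomorphic as representations of `N = ker χ` over `F`, then `V` is
irreducible as a representation of `N` over `E`. -/
theorem stmt_11 {E G V : Type*} [Field E] [CharZero E] [Group G]
    [AddCommGroup V] [Module E V] [FiniteDimensional E V]
    (ρ : Representation E G V)
    (hnontriv : Nontrivial V)
    (hirr : ∀ U : Submodule E V, (∀ g : G, ∀ v ∈ U, ρ g v ∈ U) → U = ⊥ ∨ U = ⊤)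
    (χ : G →* Eˣ) (hχ : ∀ g : G, χ g * χ g = 1) (g₀ : G) (hg₀ : χ g₀ = -1)
    (ψ : Module.End E V) (hbij : Function.Bijective ψ)
    (htw : ∀ (g : G) (v : V), ψ (ρ g v) = (χ g : E) • ρ g (ψ v))
    (α : Eˣ) (hα : ψ * ψ = (α : E) • (1 : Module.End E V))
    (hnonsq : ¬∃ c : E, c ^ 2 = (α : E))
    (F : Type*) [Field F] [Algebra E F]
    (β : F) (hβ : β ^ 2 = algebraMap E F (α : E))
    (hadj : Algebra.adjoin E {β} = ⊤)
    -- the two eigenspaces of `ψ_F` on `F ⊗[E] V`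
    (hirrP : ∀ U : Submodule F (F ⊗[E] V),
      U ≤ LinearMap.ker (LinearMap.baseChange F ψ - β • LinearMap.id) →
      (∀ g : G, χ g = 1 → ∀ x ∈ U, repBaseChange F ρ g x ∈ U) →
      U = ⊥ ∨ U = LinearMap.ker (LinearMap.baseChange F ψ - β • LinearMap.id))
    (hirrM : ∀ U : Submodule F (F ⊗[E] V),
      U ≤ LinearMap.ker (LinearMap.baseChange F ψ + β • LinearMap.id) →
      (∀ g : G, χ g = 1 → ∀ x ∈ U, repBaseChange F ρ g x ∈ U) →
      U = ⊥ ∨ U = LinearMap.ker (LinearMap.baseChange F ψ + β • LinearMap.id))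
    (hPbot : LinearMap.ker (LinearMap.baseChange F ψ - β • LinearMap.id) ≠ ⊥)
    (hMbot : LinearMap.ker (LinearMap.baseChange F ψ + β • LinearMap.id) ≠ ⊥)
    (hnoniso : ¬∃ f : (LinearMap.ker (LinearMap.baseChange F ψ - β • LinearMap.id))
        →ₗ[F] (F ⊗[E] V),
      Function.Injective f ∧
      LinearMap.range f = LinearMap.ker (LinearMap.baseChange F ψ + β • LinearMap.id) ∧
      (∀ g : G, χ g = 1 →
        ∀ v w : LinearMap.ker (LinearMap.baseChange F ψ - β • LinearMap.id),
          (w : F ⊗[E] V) = repBaseChange F ρ g (v : F ⊗[E] V) →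
          f w = repBaseChange F ρ g (f v))) :
    ∀ U : Submodule E V, (∀ g : G, χ g = 1 → ∀ v ∈ U, ρ g v ∈ U) → U = ⊥ ∨ U = ⊤ := by
  classical
  haveI : CharZero F := charZero_of_injective_algebraMap (algebraMap E F).injective
  set ψF : Module.End F (F ⊗[E] V) := LinearMap.baseChange F ψ with hψFdef
  set SA : Submodule F (F ⊗[E] V) := LinearMap.ker (ψF - β • LinearMap.id) with hSAdef
  set SB : Submodule F (F ⊗[E] V) := LinearMap.ker (ψF + β • LinearMap.id) with hSBdef
  -- basic scalar facts
  have hβ0 : β ≠ 0 := by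
    intro h
    rw [h] at hβ
    have : (algebraMap E F) (α : E) = 0 := by simpa using hβ.symm
    exact (α.ne_zero) ((map_eq_zero _).mp this)
  have h2β : (2 : F) * β ≠ 0 := mul_ne_zero two_ne_zero hβ0
  have hββ : β * β = algebraMap E F (α : E) := by rw [← hβ]; ring
  -- membership criteria
  have hmemA : ∀ x : F ⊗[E] V, x ∈ SA ↔ ψF x = β • x := by
    intro x
    rw [hSAdef, LinearMap.mem_ker, LinearMap.sub_apply, LinearMap.smul_apply,
      LinearMap.id_apply, sub_eq_zero]
  have hmemB : ∀ x : F ⊗[E] V, x ∈ SB ↔ ψF x = -(β • x) := by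
    intro x
    rw [hSBdef, LinearMap.mem_ker, LinearMap.add_apply, LinearMap.smul_apply,
      LinearMap.id_apply, add_eq_zero_iff_eq_neg]
  -- ψF squared
  have hψ2 : ∀ x : F ⊗[E] V, ψF (ψF x) = (β * β) • x := by
    intro x
    induction x using TensorProduct.induction_on with
    | zero => simp
    | tmul a v =>
      have h1 : ψ (ψ v) = (α : E) • v := by
        have := LinearMap.ext_iff.mp hα v
        simpa [Module.End.mul_apply] using this
      rw [hψFdef]
      rw [LinearMap.baseChange_tmul, LinearMap.baseChange_tmul, h1, hββ,
        TensorProduct.tmul_smul, algebraMap_smul]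
    | add a b ha hb => rw [map_add, map_add, ha, hb, smul_add]
  -- base-changed representation on pure tensors
  have hrep : ∀ (g : G) (a : F) (v : V), repBaseChange F ρ g (a ⊗ₜ[E] v) = a ⊗ₜ[E] ρ g v := by
    intro g a v
    show LinearMap.baseChange F (ρ g) (a ⊗ₜ[E] v) = _
    rw [LinearMap.baseChange_tmul]
  -- N-equivariance of ψF
  have hcomm : ∀ g : G, χ g = 1 → ∀ x : F ⊗[E] V,
      ψF (repBaseChange F ρ g x) = repBaseChange F ρ g (ψF x) := by
    intro g hg x
    induction x using TensorProduct.induction_on with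
    | zero => simp
    | tmul a v =>
      rw [hrep, hψFdef, LinearMap.baseChange_tmul, LinearMap.baseChange_tmul, hrep,
        htw g v, hg]
      simp
    | add a b ha hb => rw [map_add, map_add, map_add, map_add, ha, hb]
  -- invariance of eigenspaces
  have hAinv : ∀ g : G, χ g = 1 → ∀ x ∈ SA, repBaseChange F ρ g x ∈ SA := by
    intro g hg x hx
    rw [hmemA] at hx ⊢
    rw [hcomm g hg, hx, map_smul]
  have hBinv : ∀ g : G, χ g = 1 → ∀ x ∈ SB, repBaseChange F ρ g x ∈ SB := by
    intro g hg x hx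
    rw [hmemB] at hx ⊢
    rw [hcomm g hg, hx, map_neg, map_smul]
  -- projections
  set πA : Module.End F (F ⊗[E] V) := (((2:F)*β)⁻¹) • (ψF + β • LinearMap.id) with hπAdef
  set πB : Module.End F (F ⊗[E] V) := (((2:F)*β)⁻¹) • (β • LinearMap.id - ψF) with hπBdef
  have hπAapp : ∀ x, πA x = ((2:F)*β)⁻¹ • (ψF x + β • x) := fun x => rfl
  have hπBapp : ∀ x, πB x = ((2:F)*β)⁻¹ • (β • x - ψF x) := fun x => rfl
  have hcancel : ∀ x : F ⊗[E] V, ((2:F)*β)⁻¹ • (((2:F)*β) • x) = x := by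
    intro x; rw [smul_smul, inv_mul_cancel₀ h2β, one_smul]
  have hsum : ∀ x : F ⊗[E] V, πA x + πB x = x := by
    intro x
    rw [hπAapp, hπBapp, ← smul_add]
    have : (ψF x + β • x) + (β • x - ψF x) = ((2:F)*β) • x := by module
    rw [this, hcancel]
  have hπAmem : ∀ x, πA x ∈ SA := by
    intro x
    rw [hmemA, hπAapp, map_smul, map_add, map_smul, hψ2]
    module
  have hπBmem : ∀ x, πB x ∈ SB := by
    intro x
    rw [hmemB, hπBapp, map_smul, map_sub, map_smul, hψ2]
    module
  have hπA_onA : ∀ x ∈ SA, πA x = x := by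
    intro x hx
    rw [hmemA] at hx
    rw [hπAapp, hx]
    have : β • x + β • x = ((2:F)*β) • x := by module
    rw [this, hcancel]
  have hπB_onB : ∀ x ∈ SB, πB x = x := by
    intro x hx
    rw [hmemB] at hx
    rw [hπBapp, hx]
    have : β • x - -(β • x) = ((2:F)*β) • x := by module
    rw [this, hcancel]
  have hπA_onB : ∀ x ∈ SB, πA x = 0 := by
    intro x hx
    rw [hmemB] at hx
    rw [hπAapp, hx]
    simp
  have hπB_onA : ∀ x ∈ SA, πB x = 0 := by
    intro x hx
    rw [hmemA] at hx
    rw [hπBapp, hx]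
    simp
  -- projections commute with N-action
  have hπAcomm : ∀ g : G, χ g = 1 → ∀ x,
      πA (repBaseChange F ρ g x) = repBaseChange F ρ g (πA x) := by
    intro g hg x
    rw [hπAapp, hπAapp, map_smul, map_add, map_smul, hcomm g hg]
  have hπBcomm : ∀ g : G, χ g = 1 → ∀ x,
      πB (repBaseChange F ρ g x) = repBaseChange F ρ g (πB x) := by
    intro g hg x
    rw [hπBapp, hπBapp, map_smul, map_sub, map_smul, hcomm g hg]
  -- separating functionals
  obtain ⟨φ₁, hφ₁⟩ : ∃ φ : F →ₗ[E] E, φ 1 ≠ 0 := by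
    have := (Module.forall_dual_apply_eq_zero_iff E (1 : F)).not
    simp only [one_ne_zero, iff_false, not_forall] at this
    exact this.mpr (by simp)
  have hβnotspan : β ∉ Submodule.span E {(1:F)} := by
    intro h
    obtain ⟨c, hc⟩ := Submodule.mem_span_singleton.mp h
    have hc' : β = algebraMap E F c := by
      rw [← hc, Algebra.smul_def, mul_one]
    apply hnonsq
    refine ⟨c, ?_⟩
    have : algebraMap E F (c ^ 2) = algebraMap E F (α : E) := by
      rw [map_pow, ← hc', hβ]
    exact (algebraMap E F).injective this
  obtain ⟨φ₂, hφ₂β, hφ₂1⟩ : ∃ φ : F →ₗ[E] E, φ β ≠ 0 ∧ φ 1 = 0 := by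
    obtain ⟨f, hf, hmap⟩ := Submodule.exists_dual_map_eq_bot_of_notMem hβnotspan inferInstance
    refine ⟨f, hf, ?_⟩
    have : f 1 ∈ Submodule.map f (Submodule.span E {(1:F)}) :=
      Submodule.mem_map_of_mem (Submodule.mem_span_singleton_self _)
    rwa [hmap, Submodule.mem_bot] at this
  have hΦ : ∀ (φ : F →ₗ[E] E) (a : F) (v : V),
      TensorProduct.lift ((LinearMap.lsmul E V).comp φ) (a ⊗ₜ[E] v) = φ a • v := by
    intro φ a v; simp
  -- killing lemmas
  have hkillA : ∀ v : V, (1:F) ⊗ₜ[E] v ∈ SA → v = 0 := by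
    intro v hv
    rw [hmemA] at hv
    rw [hψFdef, LinearMap.baseChange_tmul] at hv
    have hv' : (1:F) ⊗ₜ[E] ψ v = β ⊗ₜ[E] v := by
      rw [hv, TensorProduct.smul_tmul', smul_eq_mul, mul_one]
    have := congrArg (TensorProduct.lift ((LinearMap.lsmul E V).comp φ₂)) hv'
    rw [hΦ, hΦ, hφ₂1, zero_smul] at this
    exact (smul_eq_zero.mp this.symm).resolve_left hφ₂β
  have hkillB : ∀ v : V, (1:F) ⊗ₜ[E] v ∈ SB → v = 0 := by
    intro v hv
    rw [hmemB] at hv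
    rw [hψFdef, LinearMap.baseChange_tmul] at hv
    have hv' : (1:F) ⊗ₜ[E] ψ v = (-β) ⊗ₜ[E] v := by
      rw [hv, TensorProduct.smul_tmul', smul_eq_mul, mul_one, TensorProduct.neg_tmul]
    have := congrArg (TensorProduct.lift ((LinearMap.lsmul E V).comp φ₂)) hv'
    rw [hΦ, hΦ, hφ₂1, zero_smul, map_neg] at this
    have := (smul_eq_zero.mp this.symm).resolve_left (neg_ne_zero.mpr hφ₂β)
    exact this
  -- main argument
  intro U hU
  by_cases hUbot : U = ⊥
  · exact Or.inl hUbot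
  right
  set UF : Submodule F (F ⊗[E] V) := U.baseChange F with hUFdef
  have hmemUF : ∀ v ∈ U, (1:F) ⊗ₜ[E] v ∈ UF :=
    fun v hv => Submodule.tmul_mem_baseChange_of_mem 1 hv
  have hUFinv : ∀ g : G, χ g = 1 → ∀ x ∈ UF, repBaseChange F ρ g x ∈ UF := by
    intro g hg x hx
    have hx' : x ∈ Submodule.span F (U.map (TensorProduct.mk E F V 1)) := Submodule.baseChange_eq_span F U ▸ hx
    refine Submodule.span_induction (p := fun x _ => repBaseChange F ρ g x ∈ UF)
      ?_ ?_ ?_ ?_ hx'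
    · rintro _ ⟨u, hu, rfl⟩
      have : (TensorProduct.mk E F V 1) u = (1:F) ⊗ₜ[E] u := rfl
      rw [this, hrep]
      exact hmemUF _ (hU g hg u hu)
    · simp
    · intro a b _ _ ha hb; rw [map_add]; exact UF.add_mem ha hb
    · intro c y _ hy; rw [map_smul]; exact UF.smul_mem c hy
  have hd1 : ∀ v : V, (1:F) ⊗ₜ[E] v ∈ UF → v ∈ U := by
    intro v hv
    have h := coordAux U hv φ₁
    rw [hΦ] at h
    have := U.smul_mem (φ₁ 1)⁻¹ h
    rwa [smul_smul, inv_mul_cancel₀ hφ₁, one_smul] at this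
  have hUFbot : UF ≠ ⊥ := by
    intro h
    apply hUbot
    rw [eq_bot_iff]
    intro u hu
    have h1 : (1:F) ⊗ₜ[E] u ∈ UF := hmemUF u hu
    rw [h, Submodule.mem_bot] at h1
    have := congrArg (TensorProduct.lift ((LinearMap.lsmul E V).comp φ₁)) h1
    rw [hΦ, map_zero] at this
    have := (smul_eq_zero.mp this).resolve_left hφ₁
    simpa using this
  -- images of UF under the projections
  have hPAle : Submodule.map πA UF ≤ SA := by
    rintro _ ⟨x, hx, rfl⟩; exact hπAmem x
  have hPBle : Submodule.map πB UF ≤ SB := by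
    rintro _ ⟨x, hx, rfl⟩; exact hπBmem x
  have hPAinv : ∀ g : G, χ g = 1 → ∀ x ∈ Submodule.map πA UF,
      repBaseChange F ρ g x ∈ Submodule.map πA UF := by
    rintro g hg _ ⟨x, hx, rfl⟩
    exact ⟨repBaseChange F ρ g x, hUFinv g hg x hx, (hπAcomm g hg x).symm ▸ rfl⟩
  have hPBinv : ∀ g : G, χ g = 1 → ∀ x ∈ Submodule.map πB UF,
      repBaseChange F ρ g x ∈ Submodule.map πB UF := by
    rintro g hg _ ⟨x, hx, rfl⟩
    exact ⟨repBaseChange F ρ g x, hUFinv g hg x hx, (hπBcomm g hg x).symm ▸ rfl⟩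
  have hUne : ∃ u ∈ U, u ≠ 0 := by
    obtain ⟨u, hu⟩ := Submodule.exists_mem_ne_zero_of_ne_bot hUbot
    exact ⟨u, hu⟩
  rcases hirrP (Submodule.map πA UF) hPAle hPAinv with hPA | hPA
  · rcases hirrM (Submodule.map πB UF) hPBle hPBinv with hPB | hPB
    · -- both projections zero: UF = 0, contradiction
      exfalso
      apply hUFbot
      rw [eq_bot_iff]
      intro x hx
      have h1 : πA x = 0 := by
        have : πA x ∈ Submodule.map πA UF := ⟨x, hx, rfl⟩
        rwa [hPA, Submodule.mem_bot] at this
      have h2 : πB x = 0 := by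
        have : πB x ∈ Submodule.map πB UF := ⟨x, hx, rfl⟩
        rwa [hPB, Submodule.mem_bot] at this
      rw [Submodule.mem_bot, ← hsum x, h1, h2, add_zero]
    · -- πA(UF)=0, πB(UF)=SB: UF ≤ SB, so UF = SB, contradiction via hkillB
      exfalso
      have hUFle : UF ≤ SB := by
        intro x hx
        have h1 : πA x = 0 := by
          have : πA x ∈ Submodule.map πA UF := ⟨x, hx, rfl⟩
          rwa [hPA, Submodule.mem_bot] at this
        have hx2 : x = πB x := by
          rw [← zero_add (πB x), ← h1]; exact (hsum x).symm
        rw [hx2]; exact hπBmem x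
      rcases hirrM UF hUFle hUFinv with h | h
      · exact hUFbot h
      · obtain ⟨u, hu, hu0⟩ := hUne
        exact hu0 (hkillB u (h ▸ hmemUF u hu))
  · rcases hirrM (Submodule.map πB UF) hPBle hPBinv with hPB | hPB
    · -- πB(UF)=0, πA(UF)=SA: UF = SA, contradiction via hkillA
      exfalso
      have hUFle : UF ≤ SA := by
        intro x hx
        have h2 : πB x = 0 := by
          have : πB x ∈ Submodule.map πB UF := ⟨x, hx, rfl⟩
          rwa [hPB, Submodule.mem_bot] at this
        have hx2 : x = πA x := by
          rw [← add_zero (πA x), ← h2]; exact (hsum x).symm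
        rw [hx2]; exact hπAmem x
      rcases hirrP UF hUFle hUFinv with h | h
      · exact hUFbot h
      · obtain ⟨u, hu, hu0⟩ := hUne
        exact hu0 (hkillA u (h ▸ hmemUF u hu))
    · -- both projections surjective
      have hIAle : UF ⊓ SA ≤ SA := inf_le_right
      have hIAinv : ∀ g : G, χ g = 1 → ∀ x ∈ UF ⊓ SA,
          repBaseChange F ρ g x ∈ UF ⊓ SA := by
        intro g hg x hx
        exact ⟨hUFinv g hg x hx.1, hAinv g hg x hx.2⟩
      have hIBinv : ∀ g : G, χ g = 1 → ∀ x ∈ UF ⊓ SB,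
          repBaseChange F ρ g x ∈ UF ⊓ SB := by
        intro g hg x hx
        exact ⟨hUFinv g hg x hx.1, hBinv g hg x hx.2⟩
      have hUtop : UF = ⊤ → U = ⊤ := by
        intro h
        rw [eq_top_iff]
        intro v _
        exact hd1 v (h ▸ Submodule.mem_top)
      rcases hirrP (UF ⊓ SA) inf_le_right hIAinv with hIA | hIA
      · rcases hirrM (UF ⊓ SB) inf_le_right hIBinv with hIB | hIB
        · -- graph case: build forbidden isomorphism
          exfalso
          apply hnoniso
          have hmemA' : ∀ u : UF, πA (u : F ⊗[E] V) ∈ SA := fun u => hπAmem _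
          let e0 : UF →ₗ[F] SA :=
            LinearMap.codRestrict SA (πA ∘ₗ UF.subtype) hmemA'
          have he0val : ∀ u : UF, (e0 u : F ⊗[E] V) = πA (u : F ⊗[E] V) := fun u => rfl
          have he0inj : Function.Injective e0 := by
            intro u v huv
            have h1 : πA ((u:F ⊗[E] V) - v) = 0 := by
              have := congrArg (Subtype.val) huv
              rw [he0val, he0val] at this
              rw [map_sub, this, sub_self]
            have h2 : ((u:F ⊗[E] V) - v) ∈ SB := by
              have := hsum ((u:F ⊗[E] V) - v)
              rw [h1, zero_add] at this
              rw [← this]; exact hπBmem _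
            have h3 : ((u:F ⊗[E] V) - v) ∈ UF ⊓ SB :=
              ⟨UF.sub_mem u.2 v.2, h2⟩
            rw [hIB, Submodule.mem_bot, sub_eq_zero] at h3
            exact Subtype.ext h3
          have he0surj : Function.Surjective e0 := by
            intro a
            have ha : (a : F ⊗[E] V) ∈ Submodule.map πA UF := by rw [hPA]; exact a.2
            obtain ⟨u, hu, hua⟩ := ha
            exact ⟨⟨u, hu⟩, Subtype.ext (by rw [he0val]; exact hua)⟩
          let e : UF ≃ₗ[F] SA := LinearEquiv.ofBijective e0 ⟨he0inj, he0surj⟩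
          have heapp : ∀ u : UF, ((e u : SA) : F ⊗[E] V) = πA (u : F ⊗[E] V) := fun u => rfl
          have hs : ∀ a : SA, πA ((e.symm a : UF) : F ⊗[E] V) = (a : F ⊗[E] V) :=
            fun a => congrArg Subtype.val (e.apply_symm_apply a)
          refine ⟨(πB ∘ₗ UF.subtype) ∘ₗ (e.symm : SA →ₗ[F] UF), ?_, ?_, ?_⟩
          · -- injective
            intro a b hab
            have h1 : πB ((e.symm (a - b) : UF) : F ⊗[E] V) = 0 := by
              rw [map_sub e.symm]
              have : ((e.symm a - e.symm b : UF) : F ⊗[E] V)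
                  = ((e.symm a : UF) : F ⊗[E] V) - ((e.symm b : UF) : F ⊗[E] V) := rfl
              rw [this, map_sub]
              simpa using sub_eq_zero.mpr hab
            set u : UF := e.symm (a - b) with hudef
            have h2 : ((u : F ⊗[E] V)) ∈ SA := by
              have := hsum (u : F ⊗[E] V)
              rw [h1, add_zero] at this
              rw [← this]; exact hπAmem _
            have h3 : ((u : F ⊗[E] V)) ∈ UF ⊓ SA := ⟨u.2, h2⟩
            rw [hIA, Submodule.mem_bot] at h3
            have h4 : u = 0 := Subtype.ext h3
            have h5 : a - b = 0 := by
              have := congrArg e h4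
              rwa [LinearEquiv.apply_symm_apply, map_zero] at this
            exact sub_eq_zero.mp h5
          · -- range = SB
            apply le_antisymm
            · rintro _ ⟨a, rfl⟩
              exact hπBmem _
            · intro b hb
              have hb' : b ∈ Submodule.map πB UF := by rw [hPB]; exact hb
              obtain ⟨u, hu, hub⟩ := hb'
              refine ⟨e ⟨u, hu⟩, ?_⟩
              have h1 : e.symm (e ⟨u, hu⟩) = ⟨u, hu⟩ := e.symm_apply_apply _
              simp only [LinearMap.coe_comp, Function.comp_apply, LinearEquiv.coe_coe, h1]
              exact hub
          · -- equivariance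
            intro g hg v w hw
            set u : UF := e.symm v with hudef
            have hgu : repBaseChange F ρ g (u : F ⊗[E] V) ∈ UF := hUFinv g hg _ u.2
            have h1 : e0 ⟨repBaseChange F ρ g (u : F ⊗[E] V), hgu⟩ = w := by
              apply Subtype.ext
              rw [he0val]
              show πA (repBaseChange F ρ g (u : F ⊗[E] V)) = (w : F ⊗[E] V)
              rw [hπAcomm g hg, hs, ← hw]
            have h2 : e.symm w = ⟨repBaseChange F ρ g (u : F ⊗[E] V), hgu⟩ := by
              rw [← h1]
              exact e.symm_apply_apply _
            simp only [LinearMap.coe_comp, Function.comp_apply, LinearEquiv.coe_coe, h2]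
            show πB (repBaseChange F ρ g (u : F ⊗[E] V))
              = repBaseChange F ρ g (πB (u : F ⊗[E] V))
            rw [hπBcomm g hg]
        · -- SB ≤ UF, conclude UF = ⊤
          apply hUtop
          have hBle : SB ≤ UF := by
            intro b hb
            have : b ∈ UF ⊓ SB := by rw [hIB]; exact hb
            exact this.1
          rw [eq_top_iff]
          intro x _
          have hx : πA x ∈ Submodule.map πA UF := by rw [hPA]; exact hπAmem x
          obtain ⟨u, hu, hux⟩ := hx
          have e2' : πA u = u - πB u := by
            rw [eq_sub_iff_add_eq]; exact hsum u
          have h1 : x = u - πB u + πB x := by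
            calc x = πA x + πB x := (hsum x).symm
            _ = πA u + πB x := by rw [hux]
            _ = u - πB u + πB x := by rw [e2']
          rw [h1]
          exact UF.add_mem (UF.sub_mem hu (hBle (hπBmem u))) (hBle (hπBmem x))
      · -- SA ≤ UF, conclude UF = ⊤
        apply hUtop
        have hAle : SA ≤ UF := by
          intro a ha
          have : a ∈ UF ⊓ SA := by rw [hIA]; exact ha
          exact this.1
        rw [eq_top_iff]
        intro x _
        have hx : πB x ∈ Submodule.map πB UF := by rw [hPB]; exact hπBmem x
        obtain ⟨u, hu, hux⟩ := hx
        have e2' : πB u = u - πA u := by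
          rw [eq_sub_iff_add_eq, add_comm]; exact hsum u
        have h1 : x = πA x + (u - πA u) := by
          calc x = πA x + πB x := (hsum x).symm
          _ = πA x + πB u := by rw [hux]
          _ = πA x + (u - πA u) := by rw [e2']
        rw [h1]
        exact UF.add_mem (hAle (hπAmem x)) (UF.sub_mem hu (hAle (hπAmem u)))
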